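/- Let E₀ > 0, Q₀ > 0, p_max > 0, K_min = log₂(1+p_max)/p_max, K_max = 1/ln 2. If Q₀/E₀ < K_min, then among all reachable points (Ẽ, 0) (i.e., clearing the data queue), the minimum transmission time is achieved at Ẽ = E₀ - Q₀/K_min, with optimal constant power p_max and minimum time Q₀/log₂(1+p_max). -/

import Mathlib

/-- Energy-abundant case (Q₀/E₀ < K_min): among all reachable points (Et, 0), the
minimum transmission time is achieved at Et = E₀ - Q₀/K_min with constant power
p_max and minimum time Q₀/log₂(1+p_max). -/
theorem energy_abundant_min_time (E₀ Q₀ pmax : ℝ)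
    (hE₀ : 0 < E₀) (hQ₀ : 0 < Q₀) (hpmax : 0 < pmax)
    (habundant : Q₀ / E₀ < Real.logb 2 (1 + pmax) / pmax) :
    (0 ≤ E₀ - Q₀ / (Real.logb 2 (1 + pmax) / pmax) ∧
      E₀ - Q₀ / (Real.logb 2 (1 + pmax) / pmax) < E₀) ∧
    (Q₀ / (E₀ - (E₀ - Q₀ / (Real.logb 2 (1 + pmax) / pmax)))) * pmax =
      Real.logb 2 (1 + pmax) ∧
    (E₀ - (E₀ - Q₀ / (Real.logb 2 (1 + pmax) / pmax))) / pmax =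
      Q₀ / Real.logb 2 (1 + pmax) ∧
    ∀ Et pe : ℝ, 0 ≤ Et → Et < E₀ → 0 < pe → pe ≤ pmax →
      (Q₀ / (E₀ - Et)) * pe = Real.logb 2 (1 + pe) →
      Q₀ / Real.logb 2 (1 + pmax) ≤ (E₀ - Et) / pe := by
  have hlog : 0 < Real.logb 2 (1 + pmax) :=
    Real.logb_pos (by norm_num) (by linarith)
  have hK : 0 < Real.logb 2 (1 + pmax) / pmax := div_pos hlog hpmax
  have hlt : Q₀ / (Real.logb 2 (1 + pmax) / pmax) < E₀ := by
    rw [div_lt_iff₀ hK]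
    calc Q₀ = (Q₀ / E₀) * E₀ := by field_simp
    _ < (Real.logb 2 (1 + pmax) / pmax) * E₀ := by
        exact mul_lt_mul_of_pos_right habundant hE₀
    _ = E₀ * (Real.logb 2 (1 + pmax) / pmax) := by ring
  have hQK : 0 < Q₀ / (Real.logb 2 (1 + pmax) / pmax) := div_pos hQ₀ hK
  refine ⟨⟨by linarith, by linarith⟩, ?_, ?_, ?_⟩
  · have : E₀ - (E₀ - Q₀ / (Real.logb 2 (1 + pmax) / pmax)) =
        Q₀ / (Real.logb 2 (1 + pmax) / pmax) := by ring
    rw [this]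
    field_simp
  · have : E₀ - (E₀ - Q₀ / (Real.logb 2 (1 + pmax) / pmax)) =
        Q₀ / (Real.logb 2 (1 + pmax) / pmax) := by ring
    rw [this]
    field_simp
  · intro Et pe hEt hEtlt hpe hpele heq
    have hEdiff : 0 < E₀ - Et := by linarith
    have hlogpe : 0 < Real.logb 2 (1 + pe) := by
      rw [← heq]; positivity
    have hle : Real.logb 2 (1 + pe) ≤ Real.logb 2 (1 + pmax) :=
      Real.logb_le_logb_of_le (by norm_num) (by linarith) (by linarith)
    have hEq : (E₀ - Et) / pe = Q₀ / Real.logb 2 (1 + pe) := by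
      rw [← heq]; field_simp
    rw [hEq]
    exact div_le_div_of_nonneg_left hQ₀.le hlogpe hle
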